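/- For w, v ∈ Sₙ, v ≤ w in the Bruhat order if and only if r_v(p,q) ≥ r_w(p,q) for all 1 ≤ p,q ≤ n, where r_u(p,q) = #{i ≤ p : u(i) ≤ q}. -/

import Mathlib

/-- The inversion length of a permutation of `Fin n`. -/
def invLen {n : ℕ} (σ : Equiv.Perm (Fin n)) : ℕ :=
  (Finset.univ.filter fun p : Fin n × Fin n => p.1 < p.2 ∧ σ p.2 < σ p.1).card

/-- The Bruhat order on `Sₙ`: the reflexive-transitive closure of the relations
`x < t·x` for transpositions `t` with `l(t·x) = l(x) + 1`. -/
def bruhatLE {n : ℕ} : Equiv.Perm (Fin n) → Equiv.Perm (Fin n) → Prop :=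
  Relation.ReflTransGen fun x y =>
    (∃ i j : Fin n, i ≠ j ∧ y = Equiv.swap i j * x) ∧ invLen y = invLen x + 1

/-- The rank function `r_u(p,q) = #{i ≤ p : u(i) ≤ q}` of the permutation matrix of `u`
(rows and columns counted from `1`, i.e. `i : Fin n` contributes when `i < p`). -/
def rankFn {n : ℕ} (u : Equiv.Perm (Fin n)) (p q : ℕ) : ℕ :=
  (Finset.univ.filter fun i : Fin n => (i : ℕ) < p ∧ ((u i : Fin n) : ℕ) < q).card

open Equiv Finset

variable {n : ℕ}

lemma rankFn_eq_sum (u : Equiv.Perm (Fin n)) (p q : ℕ) :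
    rankFn u p q = ∑ k : Fin n, if ((k : ℕ) < p ∧ ((u k : Fin n) : ℕ) < q) then 1 else 0 :=
  Finset.card_filter _ _

lemma rank_swap (x : Equiv.Perm (Fin n)) (a b : Fin n) (hab : a < b) (hij : x⁻¹ a < x⁻¹ b)
    (p q : ℕ) :
    rankFn (Equiv.swap a b * x) p q
      + (if ((x⁻¹ a : Fin n) : ℕ) < p ∧ p ≤ ((x⁻¹ b : Fin n) : ℕ) ∧ (a : ℕ) < q ∧ q ≤ (b : ℕ)
          then 1 else 0)
      = rankFn x p q := by
  set i := x⁻¹ a with hidef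
  set j := x⁻¹ b with hjdef
  have hxi : x i = a := x.apply_symm_apply a
  have hxj : x j = b := x.apply_symm_apply b
  have hne : i ≠ j := ne_of_lt hij
  have key : ∀ k : Fin n, k ≠ i → k ≠ j → (Equiv.swap a b * x) k = x k := by
    intro k hki hkj
    simp only [Equiv.Perm.mul_apply]
    exact Equiv.swap_apply_of_ne_of_ne
      (fun h => hki (x.injective (h.trans hxi.symm)))
      (fun h => hkj (x.injective (h.trans hxj.symm)))
  have hji : j ∈ univ.erase i := by simp [Finset.mem_erase, hne.symm]
  have split : ∀ f : Fin n → ℕ,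
      ∑ k, f k = f i + f j + ∑ k ∈ (univ.erase i).erase j, f k := by
    intro f
    rw [← Finset.add_sum_erase _ f (mem_univ i), ← Finset.add_sum_erase _ f hji]
    ring
  rw [rankFn_eq_sum, rankFn_eq_sum, split, split]
  have hres : (∑ k ∈ (univ.erase i).erase j,
        if ((k : ℕ) < p ∧ (((Equiv.swap a b * x) k : Fin n) : ℕ) < q) then 1 else 0)
      = ∑ k ∈ (univ.erase i).erase j,
        if ((k : ℕ) < p ∧ ((x k : Fin n) : ℕ) < q) then 1 else 0 := by
    refine Finset.sum_congr rfl fun k hk => ?_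
    rw [Finset.mem_erase, Finset.mem_erase] at hk
    rw [key k hk.2.1 hk.1]
  rw [hres]
  have h1 : (Equiv.swap a b * x) i = b := by
    simp [Equiv.Perm.mul_apply, hxi]
  have h2 : (Equiv.swap a b * x) j = a := by
    simp [Equiv.Perm.mul_apply, hxj]
  rw [h1, h2]
  have hab' : (a : ℕ) < (b : ℕ) := hab
  have hij' : (i : ℕ) < (j : ℕ) := hij
  split_ifs <;> omega

lemma invLen_eq_sum (u : Equiv.Perm (Fin n)) :
    invLen u = ∑ pq ∈ (univ.filter fun pq : Fin n × Fin n => pq.1 < pq.2),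
      if u pq.2 < u pq.1 then 1 else 0 := by
  rw [invLen, ← Finset.card_filter, Finset.filter_filter]

lemma swap_mul_eq (x : Equiv.Perm (Fin n)) (a b : Fin n) :
    Equiv.swap a b * x = x * Equiv.swap (x⁻¹ a) (x⁻¹ b) :=
  Equiv.swap_mul_eq_mul_swap x a b

lemma invLen_swap (x : Equiv.Perm (Fin n)) (a b : Fin n) (hab : a < b) (hij : x⁻¹ a < x⁻¹ b) :
    invLen (Equiv.swap a b * x)
      = invLen x + 1
        + 2 * (univ.filter fun k : Fin n =>
            x⁻¹ a < k ∧ k < x⁻¹ b ∧ a < x k ∧ x k < b).card := by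
  set i := x⁻¹ a with hidef
  set j := x⁻¹ b with hjdef
  set s : Equiv.Perm (Fin n) := Equiv.swap i j with hsdef
  have hxi : x i = a := x.apply_symm_apply a
  have hxj : x j = b := x.apply_symm_apply b
  have hne : i ≠ j := ne_of_lt hij
  have hsi : s i = j := Equiv.swap_apply_left i j
  have hsj : s j = i := Equiv.swap_apply_right i j
  have hss : ∀ k, s (s k) = k := fun k => Equiv.swap_apply_self i j k
  have hsinj : ∀ p q : Fin n, s p = s q → p = q := fun p q h => s.injective h
  have happ : ∀ k, (Equiv.swap a b * x) k = x (s k) := by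
    intro k
    rw [swap_mul_eq x a b]
    rfl
  set P : Finset (Fin n × Fin n) := univ.filter fun pq : Fin n × Fin n => pq.1 < pq.2 with hP
  set Φ : Fin n × Fin n → Fin n × Fin n :=
    fun pq => if s pq.1 < s pq.2 then (s pq.1, s pq.2) else (s pq.2, s pq.1) with hΦ
  have hmemP : ∀ pq : Fin n × Fin n, pq ∈ P ↔ pq.1 < pq.2 := by
    intro pq; simp [hP]
  have hΦP : ∀ pq ∈ P, Φ pq ∈ P := by
    intro pq hpq
    rw [hmemP] at hpq ⊢
    have hne2 : s pq.1 ≠ s pq.2 := fun h => absurd (hsinj _ _ h) (ne_of_lt hpq)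
    by_cases h : s pq.1 < s pq.2
    · simpa [hΦ, h] using h
    · have : s pq.2 < s pq.1 := lt_of_le_of_ne (not_lt.mp h) (Ne.symm hne2)
      simpa [hΦ, h] using this
  have hΦΦ : ∀ pq ∈ P, Φ (Φ pq) = pq := by
    intro pq hpq
    rw [hmemP] at hpq
    have hne2 : s pq.1 ≠ s pq.2 := fun h => absurd (hsinj _ _ h) (ne_of_lt hpq)
    by_cases h : s pq.1 < s pq.2
    · simp only [hΦ, if_pos h, hss]
      rw [if_pos hpq]
    · have h2 : s pq.2 < s pq.1 := lt_of_le_of_ne (not_lt.mp h) (Ne.symm hne2)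
      simp only [hΦ, if_neg h, hss]
      rw [if_neg (not_lt.mpr (le_of_lt hpq))]
  have hre : (∑ pq ∈ P, if x (s pq.2) < x (s pq.1) then 1 else 0)
      = ∑ pq ∈ P, (if s pq.1 < s pq.2 then (if x pq.2 < x pq.1 then (1:ℕ) else 0)
          else (if x pq.1 < x pq.2 then 1 else 0)) := by
    refine Finset.sum_nbij' Φ Φ hΦP hΦP hΦΦ hΦΦ ?_
    intro pq hpq
    rw [hmemP] at hpq
    have hne2 : s pq.1 ≠ s pq.2 := fun h => absurd (hsinj _ _ h) (ne_of_lt hpq)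
    by_cases h : s pq.1 < s pq.2
    · simp only [hΦ, if_pos h, hss]
      rw [if_pos hpq]
    · have h2 : s pq.2 < s pq.1 := lt_of_le_of_ne (not_lt.mp h) (Ne.symm hne2)
      simp only [hΦ, if_neg h, hss]
      rw [if_neg (not_lt.mpr (le_of_lt hpq))]
  -- rewrite invLen of the product
  have hy : invLen (Equiv.swap a b * x)
      = ∑ pq ∈ P, (if s pq.1 < s pq.2 then (if x pq.2 < x pq.1 then (1:ℕ) else 0)
          else (if x pq.1 < x pq.2 then 1 else 0)) := by
    rw [invLen_eq_sum]
    rw [show (∑ pq ∈ P, if (Equiv.swap a b * x) pq.2 < (Equiv.swap a b * x) pq.1 then (1:ℕ) else 0)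
        = ∑ pq ∈ P, if x (s pq.2) < x (s pq.1) then 1 else 0 from
      Finset.sum_congr rfl fun pq _ => by rw [happ, happ]]
    exact hre
  rw [hy, Finset.sum_ite, invLen_eq_sum x,
    ← Finset.sum_filter_add_sum_filter_not P (fun pq => s pq.1 < s pq.2)
      (fun pq : Fin n × Fin n => if x pq.2 < x pq.1 then (1:ℕ) else 0)]
  set mid : Finset (Fin n) := univ.filter fun k : Fin n => i < k ∧ k < j with hmid
  set R : Finset (Fin n × Fin n) := P.filter (fun pq => ¬ s pq.1 < s pq.2) with hR
  suffices h : (∑ pq ∈ R, if x pq.1 < x pq.2 then (1:ℕ) else 0)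
      = (∑ pq ∈ R, if x pq.2 < x pq.1 then (1:ℕ) else 0) + 1
        + 2 * (univ.filter fun k : Fin n => i < k ∧ k < j ∧ a < x k ∧ x k < b).card by
    omega
  -- characterize R
  have hchar : ∀ p q : Fin n, p < q → (¬ s p < s q ↔
      ((p = i ∧ q = j) ∨ (p = i ∧ i < q ∧ q < j) ∨ (i < p ∧ p < j ∧ q = j))) := by
    intro p q hpq
    by_cases hpi : p = i
    · subst hpi
      by_cases hqj : q = j
      · subst hqj
        simp only [hsi, hsj]
        constructor
        · intro _; simp
        · intro _; exact not_lt.mpr (le_of_lt hij)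
      · have hqi : q ≠ i := ne_of_gt hpq
        have hsq : s q = q := Equiv.swap_apply_of_ne_of_ne hqi hqj
        rw [hsi, hsq]
        constructor
        · intro hh
          exact Or.inr (Or.inl ⟨rfl, hpq, lt_of_le_of_ne (not_lt.mp hh) hqj⟩)
        · rintro (⟨_, hq⟩ | ⟨_, _, hq⟩ | ⟨hip, _, _⟩)
          · exact absurd hq hqj
          · exact not_lt.mpr (le_of_lt hq)
          · exact absurd rfl (ne_of_gt hip)
    · by_cases hqi : q = i
      · subst hqi
        have hpj : p ≠ j := ne_of_lt (lt_trans hpq hij)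
        have hsp : s p = p := Equiv.swap_apply_of_ne_of_ne hpi hpj
        rw [hsp, hsi]
        constructor
        · intro hh; exact absurd (lt_trans hpq hij) (not_lt.mp hh).not_gt
        · rintro (⟨hp, _⟩ | ⟨hp, _, _⟩ | ⟨_, _, hq⟩)
          · exact absurd hp hpi
          · exact absurd hp hpi
          · exact absurd hq hne
      · by_cases hpj : p = j
        · subst hpj
          have hqj : q ≠ j := ne_of_gt hpq
          have hsq : s q = q := Equiv.swap_apply_of_ne_of_ne hqi hqj
          rw [hsj, hsq]
          constructor
          · intro hh; exact absurd (lt_trans hij hpq) (not_lt.mp hh).not_gt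
          · rintro (⟨hp, _⟩ | ⟨hp, _, _⟩ | ⟨_, hp, _⟩)
            · exact absurd hp hpi
            · exact absurd hp hpi
            · exact absurd hp (lt_irrefl _)
        · have hsp : s p = p := Equiv.swap_apply_of_ne_of_ne hpi hpj
          by_cases hqj : q = j
          · subst hqj
            rw [hsp, hsj]
            constructor
            · intro hh
              exact Or.inr (Or.inr ⟨lt_of_le_of_ne (not_lt.mp hh) (Ne.symm hpi), hpq, rfl⟩)
            · rintro (⟨hp, _⟩ | ⟨hp, _, _⟩ | ⟨hip, _, _⟩)
              · exact absurd hp hpi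
              · exact absurd hp hpi
              · exact not_lt.mpr (le_of_lt hip)
          · have hsq : s q = q := Equiv.swap_apply_of_ne_of_ne hqi hqj
            rw [hsp, hsq]
            constructor
            · intro hh; exact absurd hpq (not_lt.mp hh).not_gt
            · rintro (⟨hp, _⟩ | ⟨hp, _, _⟩ | ⟨_, _, hq⟩)
              · exact absurd hp hpi
              · exact absurd hp hpi
              · exact absurd hq hqj
  have hmidmem : ∀ k : Fin n, k ∈ mid ↔ (i < k ∧ k < j) := by
    intro k; simp [hmid]
  have hRchar : R = insert ((i, j) : Fin n × Fin n)
      ((mid.image fun k => ((i : Fin n), k)) ∪ (mid.image fun k => (k, (j : Fin n)))) := by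
    ext pq
    rcases pq with ⟨p1, p2⟩
    simp only [hR, Finset.mem_filter, Finset.mem_insert, Finset.mem_union, Finset.mem_image,
      Prod.mk.injEq]
    constructor
    · rintro ⟨hpqP, hns⟩
      have hpq : p1 < p2 := (hmemP (p1, p2)).mp hpqP
      rcases (hchar p1 p2 hpq).mp hns with ⟨h1, h2⟩ | ⟨h1, h2, h3⟩ | ⟨h1, h2, h3⟩
      · exact Or.inl ⟨h1, h2⟩
      · exact Or.inr (Or.inl ⟨p2, (hmidmem p2).mpr ⟨h2, h3⟩, h1.symm, rfl⟩)
      · exact Or.inr (Or.inr ⟨p1, (hmidmem p1).mpr ⟨h1, h2⟩, rfl, h3.symm⟩)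
    · intro hmem
      have hpq : p1 < p2 ∧ ¬ s p1 < s p2 := by
        rcases hmem with ⟨h1, h2⟩ | ⟨k, hk, hk1, hk2⟩ | ⟨k, hk, hk1, hk2⟩
        · subst h1; subst h2
          exact ⟨hij, (hchar i j hij).mpr (Or.inl ⟨rfl, rfl⟩)⟩
        · obtain ⟨hka, hkb⟩ := (hmidmem k).mp hk
          rw [← hk1, ← hk2]
          exact ⟨hka, (hchar i k hka).mpr (Or.inr (Or.inl ⟨rfl, hka, hkb⟩))⟩
        · obtain ⟨hka, hkb⟩ := (hmidmem k).mp hk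
          rw [← hk1, ← hk2]
          exact ⟨hkb, (hchar k j hkb).mpr (Or.inr (Or.inr ⟨hka, hkb, rfl⟩))⟩
      exact ⟨(hmemP (p1, p2)).mpr hpq.1, hpq.2⟩
  have hinot : ((i, j) : Fin n × Fin n)
      ∉ (mid.image fun k => ((i : Fin n), k)) ∪ (mid.image fun k => (k, (j : Fin n))) := by
    simp only [Finset.mem_union, Finset.mem_image, Prod.mk.injEq]
    rintro (⟨k, hk, _, hk2⟩ | ⟨k, hk, hk1, _⟩)
    · obtain ⟨_, hb⟩ := (hmidmem k).mp hk
      exact absurd (hk2 ▸ hb) (lt_irrefl j)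
    · obtain ⟨ha, _⟩ := (hmidmem k).mp hk
      exact absurd (hk1 ▸ ha) (lt_irrefl i)
  have hdisj : Disjoint (mid.image fun k => ((i : Fin n), k))
      (mid.image fun k => (k, (j : Fin n))) := by
    rw [Finset.disjoint_left]
    intro pq h1 h2
    rcases pq with ⟨p1, p2⟩
    simp only [Finset.mem_image, Prod.mk.injEq] at h1 h2
    obtain ⟨k, hk, hk1, hk2⟩ := h1
    obtain ⟨k', hk', hk1', hk2'⟩ := h2
    have hki : k' = i := hk1'.trans hk1.symm
    exact absurd (hki ▸ ((hmidmem k').mp hk').1) (lt_irrefl i)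
  have hinj1 : ∀ k1 ∈ mid, ∀ k2 ∈ mid, ((i : Fin n), k1) = (i, k2) → k1 = k2 :=
    fun k1 _ k2 _ h => congrArg Prod.snd h
  have hinj2 : ∀ k1 ∈ mid, ∀ k2 ∈ mid, (k1, (j : Fin n)) = (k2, j) → k1 = k2 :=
    fun k1 _ k2 _ h => congrArg Prod.fst h
  rw [hRchar, Finset.sum_insert hinot, Finset.sum_union hdisj, Finset.sum_image hinj1,
    Finset.sum_image hinj2, Finset.sum_insert hinot, Finset.sum_union hdisj,
    Finset.sum_image hinj1, Finset.sum_image hinj2]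
  simp only [hxi, hxj]
  rw [if_pos hab, if_neg (not_lt.mpr (le_of_lt hab))]
  have hcard : (univ.filter fun k : Fin n => i < k ∧ k < j ∧ a < x k ∧ x k < b).card
      = ∑ k ∈ mid, if a < x k ∧ x k < b then (1 : ℕ) else 0 := by
    rw [Finset.card_filter, hmid, Finset.sum_filter]
    refine Finset.sum_congr rfl fun k _ => ?_
    split_ifs <;> first | rfl | (exfalso; tauto)
  have hvalne : ∀ k ∈ mid, (x k : ℕ) ≠ (a : ℕ) ∧ (x k : ℕ) ≠ (b : ℕ) := by
    intro k hk
    obtain ⟨hka, hkb⟩ := (hmidmem k).mp hk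
    constructor
    · intro h
      have hxk : x k = a := Fin.val_injective h
      have : k = i := x.injective (hxk.trans hxi.symm)
      exact absurd (this ▸ hka) (lt_irrefl i)
    · intro h
      have hxk : x k = b := Fin.val_injective h
      have : k = j := x.injective (hxk.trans hxj.symm)
      exact absurd (this ▸ hkb) (lt_irrefl j)
  have hpoint : ∑ k ∈ mid, ((if a < x k then (1 : ℕ) else 0) + (if x k < b then 1 else 0))
      = ∑ k ∈ mid, ((if x k < a then (1 : ℕ) else 0) + (if b < x k then 1 else 0)
          + 2 * (if a < x k ∧ x k < b then 1 else 0)) := by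
    refine Finset.sum_congr rfl fun k hk => ?_
    obtain ⟨hna, hnb⟩ := hvalne k hk
    have hab' : (a : ℕ) < (b : ℕ) := hab
    simp only [Fin.lt_def]
    split_ifs <;> omega
  rw [Finset.sum_add_distrib] at hpoint
  rw [Finset.sum_add_distrib, Finset.sum_add_distrib, ← Finset.mul_sum] at hpoint
  rw [hcard]
  omega

lemma rankFn_eq_sum' (u : Equiv.Perm (Fin n)) (p q : ℕ) :
    rankFn u p q = ∑ k : Fin n, if ((k : ℕ) < p ∧ ((u k : Fin n) : ℕ) < q) then 1 else 0 :=
  Finset.card_filter _ _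

lemma card_val_lt {p : ℕ} (hp : p ≤ n) :
    (univ.filter fun k : Fin n => (k : ℕ) < p).card = p := by
  have h : (univ.filter fun k : Fin n => (k : ℕ) < p).card = (Finset.range p).card := by
    refine Finset.card_bij' (fun k _ => (k : ℕ))
      (fun m hm => ⟨m, lt_of_lt_of_le (Finset.mem_range.mp hm) hp⟩) ?_ ?_ ?_ ?_
    · intro k hk
      simp only [Finset.mem_filter] at hk
      exact Finset.mem_range.mpr hk.2
    · intro m hm
      simp only [Finset.mem_filter, Finset.mem_univ, true_and]
      exact Finset.mem_range.mp hm
    · intro k hk; rfl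
    · intro m hm; rfl
  rw [h, Finset.card_range]

lemma rank_compl (u : Equiv.Perm (Fin n)) (p q : ℕ) (hp : p ≤ n) :
    rankFn u p q + (univ.filter fun k : Fin n => (k : ℕ) < p ∧ q ≤ ((u k : Fin n) : ℕ)).card
      = p := by
  have h1 : rankFn u p q
      = ((univ.filter fun k : Fin n => (k : ℕ) < p).filter
          (fun k => ((u k : Fin n) : ℕ) < q)).card := by
    rw [rankFn, Finset.filter_filter]
  have h2 : (univ.filter fun k : Fin n => (k : ℕ) < p ∧ q ≤ ((u k : Fin n) : ℕ)).card
      = ((univ.filter fun k : Fin n => (k : ℕ) < p).filter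
          (fun k => ¬ ((u k : Fin n) : ℕ) < q)).card := by
    rw [Finset.filter_filter]
    congr 1
    refine Finset.filter_congr fun k _ => ?_
    omega
  rw [h1, h2, Finset.card_filter_add_card_filter_not, card_val_lt hp]

lemma rank_succ (u : Equiv.Perm (Fin n)) (i : Fin n) (q : ℕ) :
    rankFn u ((i : ℕ) + 1) q
      = rankFn u (i : ℕ) q + (if ((u i : Fin n) : ℕ) < q then 1 else 0) := by
  rw [rankFn_eq_sum', rankFn_eq_sum',
    ← Finset.add_sum_erase _ _ (mem_univ i), ← Finset.add_sum_erase _ _ (mem_univ i)]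
  have hres : (∑ k ∈ univ.erase i, if ((k : ℕ) < (i : ℕ) + 1 ∧ ((u k : Fin n) : ℕ) < q) then 1 else 0)
      = ∑ k ∈ univ.erase i, if ((k : ℕ) < (i : ℕ) ∧ ((u k : Fin n) : ℕ) < q) then 1 else 0 := by
    refine Finset.sum_congr rfl fun k hk => ?_
    have hkne : (k : ℕ) ≠ (i : ℕ) := by
      intro h
      exact (Finset.mem_erase.mp hk).1 (Fin.val_injective h)
    exact if_congr (by omega) rfl rfl
  rw [hres]
  have hii : ¬ ((i : ℕ) < (i : ℕ)) := lt_irrefl _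
  split_ifs <;> omega

lemma rank_agree_low (v w : Equiv.Perm (Fin n)) (i : Fin n)
    (hlow : ∀ k : Fin n, k < i → v k = w k) (q : ℕ) :
    rankFn v (i : ℕ) q = rankFn w (i : ℕ) q := by
  rw [rankFn_eq_sum', rankFn_eq_sum']
  refine Finset.sum_congr rfl fun k _ => ?_
  by_cases hk : (k : ℕ) < (i : ℕ)
  · rw [hlow k hk]
  · rw [if_neg (fun hc => hk hc.1), if_neg (fun hc => hk hc.1)]

lemma claimS (v w : Equiv.Perm (Fin n)) (i j : Fin n)
    (hdom : ∀ p q : ℕ, rankFn w p q ≤ rankFn v p q)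
    (hlow : ∀ k : Fin n, (k : ℕ) < (i : ℕ) → v k = w k)
    (haw : ((v i : Fin n) : ℕ) < ((w i : Fin n) : ℕ))
    (hF3 : ∀ k : Fin n, (i : ℕ) < (k : ℕ) → (k : ℕ) < (j : ℕ) →
      ¬(((v i : Fin n) : ℕ) < ((v k : Fin n) : ℕ)
          ∧ ((v k : Fin n) : ℕ) ≤ ((w i : Fin n) : ℕ)))
    (hbw : ((v j : Fin n) : ℕ) ≤ ((w i : Fin n) : ℕ))
    (p q : ℕ) (hip : (i : ℕ) < p) (hpj : p ≤ (j : ℕ))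
    (haq : ((v i : Fin n) : ℕ) < q) (hqb : q ≤ ((v j : Fin n) : ℕ)) :
    rankFn w p q < rankFn v p q := by
  have hpn : p ≤ n := le_of_lt (lt_of_le_of_lt hpj j.isLt)
  have hqW : q ≤ ((w i : Fin n) : ℕ) := le_trans hqb hbw
  have hWn : ((w i : Fin n) : ℕ) + 1 ≤ n := (w i).isLt
  set W := ((w i : Fin n) : ℕ) with hW
  set Sv := univ.filter (fun k : Fin n => (k : ℕ) < p ∧ q ≤ ((v k : Fin n) : ℕ)) with hSv
  set Sw := univ.filter (fun k : Fin n => (k : ℕ) < p ∧ q ≤ ((w k : Fin n) : ℕ)) with hSw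
  set Sv' := univ.filter (fun k : Fin n => (k : ℕ) < p ∧ W + 1 ≤ ((v k : Fin n) : ℕ)) with hSv'
  set Sw' := univ.filter (fun k : Fin n => (k : ℕ) < p ∧ W + 1 ≤ ((w k : Fin n) : ℕ)) with hSw'
  set Aset := univ.filter (fun k : Fin n => (k : ℕ) < (i : ℕ) ∧ q ≤ ((w k : Fin n) : ℕ)) with hAset
  set A2 := univ.filter (fun k : Fin n => (k : ℕ) < (i : ℕ) ∧ W + 1 ≤ ((w k : Fin n) : ℕ)) with hA2
  set gset := univ.filter
    (fun k : Fin n => (i : ℕ) < (k : ℕ) ∧ (k : ℕ) < p ∧ W < ((v k : Fin n) : ℕ)) with hgset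
  set Gset := univ.filter
    (fun k : Fin n => (i : ℕ) < (k : ℕ) ∧ (k : ℕ) < p ∧ q ≤ ((w k : Fin n) : ℕ)) with hGset
  set G' := univ.filter
    (fun k : Fin n => (i : ℕ) < (k : ℕ) ∧ (k : ℕ) < p ∧ W + 1 ≤ ((w k : Fin n) : ℕ)) with hG'
  have hc1 : Sv.card = Aset.card + gset.card := by
    have hunion : Sv = (univ.filter fun k : Fin n => (k : ℕ) < (i : ℕ) ∧ q ≤ ((v k : Fin n) : ℕ)) ∪ gset := by
      ext k
      simp only [hSv, hgset, Finset.mem_union, Finset.mem_filter, Finset.mem_univ, true_and]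
      constructor
      · rintro ⟨hkp, hkq⟩
        rcases lt_trichotomy ((k : ℕ)) ((i : ℕ)) with hk | hk | hk
        · exact Or.inl ⟨hk, hkq⟩
        · exfalso
          have hki : k = i := Fin.val_injective hk
          rw [hki] at hkq
          omega
        · refine Or.inr ⟨hk, hkp, ?_⟩
          by_contra hle
          exact hF3 k hk (by omega) ⟨by omega, by omega⟩
      · rintro (⟨hk, hkq⟩ | ⟨hk1, hk2, hk3⟩)
        · exact ⟨by omega, hkq⟩
        · exact ⟨hk2, by omega⟩
    have heqA : (univ.filter fun k : Fin n => (k : ℕ) < (i : ℕ) ∧ q ≤ ((v k : Fin n) : ℕ)) = Aset := by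
      refine Finset.filter_congr fun k _ => ?_
      constructor
      · rintro ⟨hk, hkq⟩; rw [hlow k hk] at hkq; exact ⟨hk, hkq⟩
      · rintro ⟨hk, hkq⟩; rw [← hlow k hk] at hkq; exact ⟨hk, hkq⟩
    have hdisj : Disjoint (univ.filter fun k : Fin n => (k : ℕ) < (i : ℕ) ∧ q ≤ ((v k : Fin n) : ℕ)) gset := by
      rw [Finset.disjoint_left]
      intro k h1 h2
      simp only [hgset, Finset.mem_filter, Finset.mem_univ, true_and] at h1 h2
      omega
    rw [hunion, Finset.card_union_of_disjoint hdisj, heqA]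
  have hc2 : Sw.card = Aset.card + 1 + Gset.card := by
    have hinot : i ∉ Aset ∪ Gset := by
      simp only [hAset, hGset, Finset.mem_union, Finset.mem_filter, Finset.mem_univ, true_and]
      omega
    have hdisj : Disjoint Aset Gset := by
      rw [Finset.disjoint_left]
      intro k h1 h2
      simp only [hAset, hGset, Finset.mem_filter, Finset.mem_univ, true_and] at h1 h2
      omega
    have hunion : Sw = insert i (Aset ∪ Gset) := by
      ext k
      simp only [hSw, hAset, hGset, Finset.mem_insert, Finset.mem_union, Finset.mem_filter,
        Finset.mem_univ, true_and]
      constructor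
      · rintro ⟨hkp, hkq⟩
        rcases lt_trichotomy ((k : ℕ)) ((i : ℕ)) with hk | hk | hk
        · exact Or.inr (Or.inl ⟨hk, hkq⟩)
        · exact Or.inl (Fin.val_injective hk)
        · exact Or.inr (Or.inr ⟨hk, hkp, hkq⟩)
      · rintro (rfl | ⟨hk, hkq⟩ | ⟨hk1, hk2, hk3⟩)
        · exact ⟨hip, hqW⟩
        · exact ⟨by omega, hkq⟩
        · exact ⟨hk2, hk3⟩
    rw [hunion, Finset.card_insert_of_notMem hinot, Finset.card_union_of_disjoint hdisj]
    omega
  have hc3 : Sv'.card = A2.card + gset.card := by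
    have hunion : Sv' = (univ.filter fun k : Fin n => (k : ℕ) < (i : ℕ) ∧ W + 1 ≤ ((v k : Fin n) : ℕ)) ∪ gset := by
      ext k
      simp only [hSv', hgset, Finset.mem_union, Finset.mem_filter, Finset.mem_univ, true_and]
      constructor
      · rintro ⟨hkp, hkq⟩
        rcases lt_trichotomy ((k : ℕ)) ((i : ℕ)) with hk | hk | hk
        · exact Or.inl ⟨hk, hkq⟩
        · exfalso
          have hki : k = i := Fin.val_injective hk
          rw [hki] at hkq
          omega
        · exact Or.inr ⟨hk, hkp, by omega⟩
      · rintro (⟨hk, hkq⟩ | ⟨hk1, hk2, hk3⟩)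
        · exact ⟨by omega, hkq⟩
        · exact ⟨hk2, by omega⟩
    have heqA : (univ.filter fun k : Fin n => (k : ℕ) < (i : ℕ) ∧ W + 1 ≤ ((v k : Fin n) : ℕ)) = A2 := by
      refine Finset.filter_congr fun k _ => ?_
      constructor
      · rintro ⟨hk, hkq⟩; rw [hlow k hk] at hkq; exact ⟨hk, hkq⟩
      · rintro ⟨hk, hkq⟩; rw [← hlow k hk] at hkq; exact ⟨hk, hkq⟩
    have hdisj : Disjoint (univ.filter fun k : Fin n => (k : ℕ) < (i : ℕ) ∧ W + 1 ≤ ((v k : Fin n) : ℕ)) gset := by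
      rw [Finset.disjoint_left]
      intro k h1 h2
      simp only [hgset, Finset.mem_filter, Finset.mem_univ, true_and] at h1 h2
      omega
    rw [hunion, Finset.card_union_of_disjoint hdisj, heqA]
  have hc4 : Sw'.card = A2.card + G'.card := by
    have hunion : Sw' = A2 ∪ G' := by
      ext k
      simp only [hSw', hA2, hG', Finset.mem_union, Finset.mem_filter, Finset.mem_univ, true_and]
      constructor
      · rintro ⟨hkp, hkq⟩
        rcases lt_trichotomy ((k : ℕ)) ((i : ℕ)) with hk | hk | hk
        · exact Or.inl ⟨hk, hkq⟩
        · exfalso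
          have hki : k = i := Fin.val_injective hk
          rw [hki] at hkq
          omega
        · exact Or.inr ⟨hk, hkp, hkq⟩
      · rintro (⟨hk, hkq⟩ | ⟨hk1, hk2, hk3⟩)
        · exact ⟨by omega, hkq⟩
        · exact ⟨hk2, hk3⟩
    have hdisj : Disjoint A2 G' := by
      rw [Finset.disjoint_left]
      intro k h1 h2
      simp only [hA2, hG', Finset.mem_filter, Finset.mem_univ, true_and] at h1 h2
      omega
    rw [hunion, Finset.card_union_of_disjoint hdisj]
  have hsub : G'.card ≤ Gset.card := by
    refine Finset.card_le_card ?_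
    intro k hk
    simp only [hG', hGset, Finset.mem_filter, Finset.mem_univ, true_and] at hk ⊢
    omega
  have hcompl_v : rankFn v p q + Sv.card = p := rank_compl v p q hpn
  have hcompl_w : rankFn w p q + Sw.card = p := rank_compl w p q hpn
  have hcompl_v' : rankFn v p (W + 1) + Sv'.card = p := rank_compl v p (W + 1) hpn
  have hcompl_w' : rankFn w p (W + 1) + Sw'.card = p := rank_compl w p (W + 1) hpn
  have hd := hdom p (W + 1)
  omega

lemma rankFn_min (u : Equiv.Perm (Fin n)) (p q : ℕ) :
    rankFn u p q = rankFn u (min p n) (min q n) := by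
  rw [rankFn, rankFn]
  congr 1
  refine Finset.filter_congr fun k _ => ?_
  have h1 := k.isLt
  have h2 := (u k).isLt
  omega

lemma rank_le_of_swap (x : Equiv.Perm (Fin n)) (a b : Fin n) (hab : a < b)
    (hlen : invLen (Equiv.swap a b * x) = invLen x + 1) (p q : ℕ) :
    rankFn (Equiv.swap a b * x) p q ≤ rankFn x p q := by
  have hne : x⁻¹ a ≠ x⁻¹ b := fun h => (ne_of_lt hab) ((x⁻¹).injective h)
  rcases hne.lt_or_gt with hij | hij
  · have := rank_swap x a b hab hij p q
    split_ifs at this <;> omega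
  · exfalso
    have hx : Equiv.swap a b * (Equiv.swap a b * x) = x := by
      rw [← mul_assoc, Equiv.swap_mul_self, one_mul]
    have hya : (Equiv.swap a b * x)⁻¹ a = x⁻¹ b := by
      simp [mul_inv_rev, Equiv.Perm.mul_apply, Equiv.swap_inv, Equiv.swap_apply_left]
    have hyb : (Equiv.swap a b * x)⁻¹ b = x⁻¹ a := by
      simp [mul_inv_rev, Equiv.Perm.mul_apply, Equiv.swap_inv, Equiv.swap_apply_right]
    have h2 := invLen_swap (Equiv.swap a b * x) a b hab (by rw [hya, hyb]; exact hij)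
    rw [hx, hlen] at h2
    omega

lemma rank_le_of_step (x y : Equiv.Perm (Fin n))
    (h : (∃ i j : Fin n, i ≠ j ∧ y = Equiv.swap i j * x) ∧ invLen y = invLen x + 1)
    (p q : ℕ) : rankFn y p q ≤ rankFn x p q := by
  obtain ⟨⟨c, d, hcd, rfl⟩, hlen⟩ := h
  rcases hcd.lt_or_gt with h1 | h1
  · exact rank_le_of_swap x c d h1 hlen p q
  · rw [Equiv.swap_comm] at hlen ⊢
    exact rank_le_of_swap x d c h1 hlen p q

lemma bruhat_forward {v w : Equiv.Perm (Fin n)} (h : bruhatLE v w) (p q : ℕ) :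
    rankFn w p q ≤ rankFn v p q := by
  induction h with
  | refl => exact le_refl _
  | tail hab hbc ih => exact le_trans (rank_le_of_step _ _ hbc p q) ih

/-- Measure for the induction in the hard direction. -/
def bruMeasure (v w : Equiv.Perm (Fin n)) : ℕ :=
  ∑ p ∈ Finset.range (n + 1), ∑ q ∈ Finset.range (n + 1), (rankFn v p q - rankFn w p q)

lemma backward_aux (w : Equiv.Perm (Fin n)) : ∀ N : ℕ, ∀ v : Equiv.Perm (Fin n),
    (∀ p q : ℕ, rankFn w p q ≤ rankFn v p q) → bruMeasure v w < N → bruhatLE v w := by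
  intro N
  induction N with
  | zero => intro v _ h; omega
  | succ N ih =>
    intro v hdom hM
    by_cases hvw : v = w
    · rw [hvw]; exact Relation.ReflTransGen.refl
    · have hex : (univ.filter fun k : Fin n => v k ≠ w k).Nonempty := by
        by_contra h
        rw [Finset.not_nonempty_iff_eq_empty, Finset.filter_eq_empty_iff] at h
        exact hvw (Equiv.ext fun k => not_not.mp (h (mem_univ k)))
      set i := (univ.filter fun k : Fin n => v k ≠ w k).min' hex with hi
      have himem : v i ≠ w i := by
        have h := Finset.min'_mem _ hex
        rw [Finset.mem_filter] at h
        exact h.2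
      have hlow : ∀ k : Fin n, (k : ℕ) < (i : ℕ) → v k = w k := by
        intro k hk
        by_contra hne
        have hk' : i ≤ k := Finset.min'_le _ k (by simp [hne])
        have : (i : ℕ) ≤ (k : ℕ) := hk'
        omega
      have hvine : ((v i : Fin n) : ℕ) ≠ ((w i : Fin n) : ℕ) :=
        fun h => himem (Fin.val_injective h)
      have haw : ((v i : Fin n) : ℕ) < ((w i : Fin n) : ℕ) := by
        by_contra hcon
        have h1 := rank_succ w i (((w i : Fin n) : ℕ) + 1)
        have h2 := rank_succ v i (((w i : Fin n) : ℕ) + 1)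
        have h3 := rank_agree_low v w i (fun k hk => hlow k hk) (((w i : Fin n) : ℕ) + 1)
        have h4 := hdom ((i : ℕ) + 1) (((w i : Fin n) : ℕ) + 1)
        split_ifs at h1 h2 <;> omega
      have hJne : (univ.filter fun k : Fin n => (i : ℕ) < (k : ℕ)
          ∧ ((v i : Fin n) : ℕ) < ((v k : Fin n) : ℕ)
          ∧ ((v k : Fin n) : ℕ) ≤ ((w i : Fin n) : ℕ)).Nonempty := by
        refine ⟨v⁻¹ (w i), ?_⟩
        simp only [Finset.mem_filter, Finset.mem_univ, true_and]
        have hvk : v (v⁻¹ (w i)) = w i := v.apply_symm_apply _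
        have hne' : v⁻¹ (w i) ≠ i := fun h => himem (by rw [h] at hvk; exact hvk)
        have hnv : ((v⁻¹ (w i) : Fin n) : ℕ) ≠ (i : ℕ) := fun h => hne' (Fin.val_injective h)
        have hnlt : ¬ ((v⁻¹ (w i) : Fin n) : ℕ) < (i : ℕ) := by
          intro h
          have h' := hlow _ h
          rw [hvk] at h'
          exact hne' (w.injective h'.symm)
        rw [hvk]
        exact ⟨by omega, haw, le_refl _⟩
      set j := (univ.filter fun k : Fin n => (i : ℕ) < (k : ℕ)
          ∧ ((v i : Fin n) : ℕ) < ((v k : Fin n) : ℕ)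
          ∧ ((v k : Fin n) : ℕ) ≤ ((w i : Fin n) : ℕ)).min' hJne with hj
      have hjmem := Finset.min'_mem _ hJne
      rw [Finset.mem_filter] at hjmem
      obtain ⟨-, hij, hab', hbw⟩ := hjmem
      have hF3 : ∀ k : Fin n, (i : ℕ) < (k : ℕ) → (k : ℕ) < (j : ℕ) →
          ¬(((v i : Fin n) : ℕ) < ((v k : Fin n) : ℕ)
            ∧ ((v k : Fin n) : ℕ) ≤ ((w i : Fin n) : ℕ)) := by
        rintro k h1 h2 ⟨h3, h4⟩
        have hk' : j ≤ k := Finset.min'_le _ k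
          (by rw [Finset.mem_filter]; exact ⟨mem_univ k, h1, h3, h4⟩)
        have : (j : ℕ) ≤ (k : ℕ) := hk'
        omega
      have habF : v i < v j := by rw [Fin.lt_def]; exact hab'
      have hvia : v⁻¹ (v i) = i := v.symm_apply_apply i
      have hvjb : v⁻¹ (v j) = j := v.symm_apply_apply j
      have hijF : v⁻¹ (v i) < v⁻¹ (v j) := by
        rw [hvia, hvjb, Fin.lt_def]; exact hij
      have hlen : invLen (Equiv.swap (v i) (v j) * v) = invLen v + 1 := by
        have h := invLen_swap v (v i) (v j) habF hijF
        have hempty : (univ.filter fun k : Fin n =>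
            v⁻¹ (v i) < k ∧ k < v⁻¹ (v j) ∧ v i < v k ∧ v k < v j) = ∅ := by
          rw [Finset.filter_eq_empty_iff]
          intro k _
          rw [hvia, hvjb]
          rintro ⟨h1, h2, h3, h4⟩
          rw [Fin.lt_def] at h1 h2 h3 h4
          exact hF3 k h1 h2 ⟨h3, le_trans (le_of_lt h4) hbw⟩
        rw [hempty] at h
        simpa using h
      have hdom' : ∀ p q : ℕ, rankFn w p q ≤ rankFn (Equiv.swap (v i) (v j) * v) p q := by
        intro p q
        have hr := rank_swap v (v i) (v j) habF hijF p q
        rw [hvia, hvjb] at hr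
        by_cases hrect : ((i : ℕ) < p ∧ p ≤ (j : ℕ)
            ∧ ((v i : Fin n) : ℕ) < q ∧ q ≤ ((v j : Fin n) : ℕ))
        · have hstrict := claimS v w i j hdom hlow haw hF3 hbw p q
            hrect.1 hrect.2.1 hrect.2.2.1 hrect.2.2.2
          rw [if_pos hrect] at hr
          omega
        · rw [if_neg hrect] at hr
          have := hdom p q
          omega
      have hMdec : bruMeasure (Equiv.swap (v i) (v j) * v) w < bruMeasure v w := by
        unfold bruMeasure
        have hpoint : ∀ p q : ℕ,
            rankFn (Equiv.swap (v i) (v j) * v) p q - rankFn w p q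
              ≤ rankFn v p q - rankFn w p q := by
          intro p q
          have hr := rank_swap v (v i) (v j) habF hijF p q
          split_ifs at hr <;> omega
        refine Finset.sum_lt_sum (fun p _ => Finset.sum_le_sum fun q _ => hpoint p q)
          ⟨(i : ℕ) + 1, Finset.mem_range.mpr (by have := i.isLt; omega), ?_⟩
        refine Finset.sum_lt_sum (fun q _ => hpoint _ q)
          ⟨((v i : Fin n) : ℕ) + 1, Finset.mem_range.mpr (by have := (v i).isLt; omega), ?_⟩
        have hr := rank_swap v (v i) (v j) habF hijF ((i : ℕ) + 1) (((v i : Fin n) : ℕ) + 1)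
        rw [hvia, hvjb] at hr
        have hrect : ((i : ℕ) < (i : ℕ) + 1 ∧ (i : ℕ) + 1 ≤ (j : ℕ)
            ∧ ((v i : Fin n) : ℕ) < ((v i : Fin n) : ℕ) + 1
            ∧ ((v i : Fin n) : ℕ) + 1 ≤ ((v j : Fin n) : ℕ)) := by omega
        rw [if_pos hrect] at hr
        have hd := hdom' ((i : ℕ) + 1) (((v i : Fin n) : ℕ) + 1)
        omega
      exact Relation.ReflTransGen.head ⟨⟨v i, v j, ne_of_lt habF, rfl⟩, hlen⟩
        (ih (Equiv.swap (v i) (v j) * v) hdom' (by omega))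

/-- Ehresmann's criterion: `v ≤ w` in the Bruhat order iff `r_v(p,q) ≥ r_w(p,q)` for all
`1 ≤ p, q ≤ n`. -/
theorem bruhat_iff_rank_fn {n : ℕ} (v w : Equiv.Perm (Fin n)) :
    bruhatLE v w ↔ ∀ p q : ℕ, p ≤ n → q ≤ n → rankFn w p q ≤ rankFn v p q := by
  constructor
  · intro h p q _ _
    exact bruhat_forward h p q
  · intro h
    have hdomall : ∀ p q : ℕ, rankFn w p q ≤ rankFn v p q := by
      intro p q
      rw [rankFn_min w p q, rankFn_min v p q]
      exact h _ _ (min_le_right _ _) (min_le_right _ _)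
    exact backward_aux w (bruMeasure v w + 1) v hdomall (Nat.lt_succ_self _)
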